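/- For every x > 0, the inequality 2·ln(1/x + 1)·(1 − 2x) + ((2x+1)/(x+1))·(1 − x) − (ln(1/x + 1))²·(2x+1) < 0 holds. -/

import Mathlib

open Real

/-- The auxiliary function whose nonnegativity gives the series lower bound for log. -/
noncomputable def auxh (t : ℝ) : ℝ := Real.log (1 + t) - Real.log (1 - t) - (2 * t + 2 * t ^ 3 / 3)

lemma auxh_hasDerivAt {t : ℝ} (ht : t ∈ Set.Ioo (0:ℝ) 1) :
    HasDerivAt auxh (1 / (1 + t) + 1 / (1 - t) - (2 + 2 * t ^ 2)) t := by
  obtain ⟨ht0, ht1⟩ := ht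
  have h1 : (1:ℝ) + t ≠ 0 := by linarith
  have h2 : (1:ℝ) - t ≠ 0 := by linarith
  have d1 : HasDerivAt (fun s : ℝ => Real.log (1 + s)) (1 / (1 + t)) t := by
    have := ((hasDerivAt_id t).const_add 1).log h1
    simpa using this
  have d2 : HasDerivAt (fun s : ℝ => Real.log (1 - s)) (-1 / (1 - t)) t := by
    have := ((hasDerivAt_id t).const_sub 1).log h2
    simpa using this
  have d3 : HasDerivAt (fun s : ℝ => 2 * s) 2 t := by
    simpa using (hasDerivAt_id t).const_mul 2
  have := (d1.sub d2).sub (d3.add (((hasDerivAt_pow 3 t).const_mul 2).div_const 3))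
  convert this using 1
  · rfl
  · rfl
  · rfl
  · norm_num
    ring

lemma log_ratio_ge {t : ℝ} (ht : t ∈ Set.Ioo (0:ℝ) 1) :
    2 * t + 2 * t ^ 3 / 3 ≤ Real.log ((1 + t) / (1 - t)) := by
  obtain ⟨ht0, ht1⟩ := ht
  have key : (0:ℝ) ≤ auxh t := by
    have hmono : StrictMonoOn auxh (Set.Ico (0:ℝ) 1) := by
      apply strictMonoOn_of_deriv_pos (convex_Ico 0 1)
      · have c1 : ContinuousOn (fun s : ℝ => Real.log (1 + s)) (Set.Ico (0:ℝ) 1) := by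
          apply ContinuousOn.log (by fun_prop)
          intro s hs
          have := hs.1
          exact ne_of_gt (by linarith)
        have c2 : ContinuousOn (fun s : ℝ => Real.log (1 - s)) (Set.Ico (0:ℝ) 1) := by
          apply ContinuousOn.log (by fun_prop)
          intro s hs
          have := hs.2
          exact ne_of_gt (by linarith)
        exact (c1.sub c2).sub (by fun_prop)
      · intro s hs
        rw [interior_Ico] at hs
        rw [(auxh_hasDerivAt hs).deriv]
        obtain ⟨hs0, hs1⟩ := hs
        have h1 : (0:ℝ) < 1 + s := by linarith
        have h2 : (0:ℝ) < 1 - s := by linarith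
        have : 1 / (1 + s) + 1 / (1 - s) - (2 + 2 * s ^ 2) = 2 * s ^ 4 / ((1 + s) * (1 - s)) := by
          field_simp
          ring
        rw [this]
        positivity
    have h0 : auxh 0 = 0 := by simp [auxh]
    have := hmono (by constructor <;> norm_num) ⟨le_of_lt ht0, ht1⟩ ht0
    linarith [h0 ▸ this]
  have hpos1 : (0:ℝ) < 1 + t := by linarith
  have hpos2 : (0:ℝ) < 1 - t := by linarith
  rw [Real.log_div (ne_of_gt hpos1) (ne_of_gt hpos2)]
  unfold auxh at key
  linarith

lemma quad_pos {t L : ℝ} (ht0 : 0 < t) (ht1 : t < 1)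
    (hL : 2 * t + 2 * t ^ 3 / 3 ≤ L) :
    0 < (1 + t) * L ^ 2 - 2 * (2 * t - 1) * (1 + t) * L - (3 * t - 1) := by
  have hg : 0 < 9 + 9 * t - 24 * t ^ 3 + 12 * t ^ 4 + 4 * t ^ 6 + 4 * t ^ 7 := by
    nlinarith [sq_nonneg (t ^ 2 - t), mul_pos ht0 (sub_pos.mpr ht1),
      pow_pos ht0 6, pow_pos ht0 7]
  have h1 : 0 ≤ L - (2 * t + 2 * t ^ 3 / 3) := by linarith
  have h2 : 0 ≤ L + (2 * t + 2 * t ^ 3 / 3) - 2 * (2 * t - 1) := by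
    nlinarith [pow_pos ht0 3]
  have h3 : (0:ℝ) ≤ 1 + t := by linarith
  have hdiff : 0 ≤ (1 + t) * (L - (2 * t + 2 * t ^ 3 / 3)) *
      (L + (2 * t + 2 * t ^ 3 / 3) - 2 * (2 * t - 1)) :=
    mul_nonneg (mul_nonneg h3 h1) h2
  nlinarith [hdiff, hg]

theorem concavity_ineq (x : ℝ) (hx : 0 < x) :
    2 * Real.log (1 / x + 1) * (1 - 2 * x) +
      (2 * x + 1) / (x + 1) * (1 - x) -
      (Real.log (1 / x + 1)) ^ 2 * (2 * x + 1) < 0 := by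
  set t : ℝ := 1 / (2 * x + 1) with htdef
  have h2x1 : (0:ℝ) < 2 * x + 1 := by linarith
  have ht0 : 0 < t := by positivity
  have ht1 : t < 1 := by
    rw [htdef, div_lt_one h2x1]; linarith
  have hratio : (1 + t) / (1 - t) = 1 / x + 1 := by
    rw [htdef]
    field_simp
    ring
  set L : ℝ := Real.log (1 / x + 1) with hLdef
  have hL : 2 * t + 2 * t ^ 3 / 3 ≤ L := by
    rw [hLdef, ← hratio]
    exact log_ratio_ge ⟨ht0, ht1⟩
  have hquad := quad_pos ht0 ht1 hL
  -- translate the quadratic in t back to x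
  have hx1 : (0:ℝ) < x + 1 := by linarith
  have e1 : 1 + t = (2 * x + 2) / (2 * x + 1) := by rw [htdef]; field_simp; ring
  have e2 : 2 * t - 1 = (1 - 2 * x) / (2 * x + 1) := by rw [htdef]; field_simp; ring
  have e3 : 3 * t - 1 = (2 - 2 * x) / (2 * x + 1) := by rw [htdef]; field_simp; ring
  rw [e1, e2, e3] at hquad
  have hgoal : 2 * L * (1 - 2 * x) + (2 * x + 1) / (x + 1) * (1 - x) - L ^ 2 * (2 * x + 1)
      = -((2 * x + 1) ^ 2 / (2 * x + 2)) * ((2 * x + 2) / (2 * x + 1) * L ^ 2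
        - 2 * ((1 - 2 * x) / (2 * x + 1)) * ((2 * x + 2) / (2 * x + 1)) * L
        - (2 - 2 * x) / (2 * x + 1)) := by
    field_simp
    ring
  rw [hgoal]
  have hc : 0 < (2 * x + 1) ^ 2 / (2 * x + 2) := by positivity
  nlinarith [mul_pos hc hquad]
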